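/- For all integers k ≥ 1 and n ≥ 1, the number of length-n words over a k-letter alphabet that are unbordered equals the number of length-n words over a k-letter alphabet that have no even palindromic prefix; that is, u_k(n) = v_k(n). -/

import Mathlib

/-- A word `w` is bordered if some word `u` with `0 < |u| < |w|` is both a prefix
and a suffix of `w`. -/
def IsBordered {α : Type*} (w : List α) : Prop :=
  ∃ u : List α, u ≠ [] ∧ u.length < w.length ∧ u <+: w ∧ u <:+ w

/-- A word has an even palindromic prefix if some nonempty prefix of even length
is a palindrome. -/
def HasEvenPalPrefix {α : Type*} (w : List α) : Prop :=
  ∃ p : List α, p ≠ [] ∧ Even p.length ∧ p <+: w ∧ p.reverse = p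

namespace AuxUV
variable {α : Type*}

lemma prefix_of_prefix_append {u x t : List α} (h : u <+: x ++ t) (hl : u.length ≤ x.length) :
    u <+: x :=
  List.prefix_of_prefix_length_le h (List.prefix_append x t) hl

lemma suffix_of_suffix_le {u v w : List α} (h : u <:+ w) (h2 : v <:+ w) (hl : u.length ≤ v.length) :
    u <:+ v := by
  rw [← List.reverse_prefix] at h h2 ⊢
  exact List.prefix_of_prefix_length_le h h2 (by simpa using hl)

lemma suffix_of_suffix_append {u t y : List α} (h : u <:+ t ++ y) (hl : u.length ≤ y.length) :
    u <:+ y :=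
  suffix_of_suffix_le h (List.suffix_append t y) hl

/-- descent step: a long border yields a shorter border. -/
lemma border_descent {w u : List α} (hp : u <+: w) (hs : u <:+ w) (hlt : u.length < w.length)
    (hbig : w.length < 2 * u.length) :
    (u.drop (w.length - u.length)) <+: w ∧ (u.drop (w.length - u.length)) <:+ w ∧
      (u.drop (w.length - u.length)).length = 2 * u.length - w.length := by
  set d := w.length - u.length with hd
  obtain ⟨a, ha⟩ := id hp
  have hda : a.length = d := by
    have := congrArg List.length ha
    simp at this; omega
  have h1 : u = w.drop d := by
    have := List.suffix_iff_eq_drop.mp hs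
    simpa [hd] using this
  have h2 : w.drop d = u.drop d ++ a := by
    rw [← ha, List.drop_append_of_le_length (by omega)]
  have h3 : u = u.drop d ++ a := h1.trans h2
  have hq : u.drop d <+: u := ⟨a, h3.symm⟩
  refine ⟨hq.trans hp, (List.drop_suffix d u).trans hs, ?_⟩
  simp [List.length_drop]; omega

lemma exists_small_border {w : List α} (h : IsBordered w) :
    ∃ u, u ≠ [] ∧ 2 * u.length ≤ w.length ∧ u <+: w ∧ u <:+ w := by
  obtain ⟨u, hne, hlt, hp, hs⟩ := h
  have main : ∀ j : ℕ, ∀ u : List α, u.length ≤ j → u ≠ [] → u.length < w.length →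
      u <+: w → u <:+ w → ∃ v, v ≠ [] ∧ 2 * v.length ≤ w.length ∧ v <+: w ∧ v <:+ w := by
    intro j
    induction j with
    | zero =>
      intro u h0 hne _ _ _
      have : 0 < u.length := List.length_pos_iff.mpr hne
      omega
    | succ j ih =>
      intro u hle hne hlt hp hs
      by_cases hsmall : 2 * u.length ≤ w.length
      · exact ⟨u, hne, hsmall, hp, hs⟩
      · obtain ⟨hp', hs', hlen'⟩ := border_descent hp hs hlt (by omega)
        have hpos : 0 < u.length := List.length_pos_iff.mpr hne
        refine ih _ (by omega) ?_ (by omega) hp' hs'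
        rw [← List.length_pos_iff]; omega
  exact main u.length u le_rfl hne hlt hp hs

lemma isBordered_iff_small {w : List α} :
    IsBordered w ↔ ∃ u, u ≠ [] ∧ 2 * u.length ≤ w.length ∧ u <+: w ∧ u <:+ w := by
  constructor
  · exact exists_small_border
  · rintro ⟨u, hne, hsm, hp, hs⟩
    have : 0 < u.length := List.length_pos_iff.mpr hne
    exact ⟨u, hne, by omega, hp, hs⟩

/-- palindromic descent: a long palindromic prefix of a palindrome yields a shorter one. -/
lemma pal_descent {w p : List α} (hw : w.reverse = w) (hp : p <+: w) (hpal : p.reverse = p)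
    (hlt : p.length < w.length) (hbig : w.length < 2 * p.length) :
    (p.drop (w.length - p.length)) <+: w ∧
      (p.drop (w.length - p.length)).reverse = p.drop (w.length - p.length) ∧
      (p.drop (w.length - p.length)).length = 2 * p.length - w.length := by
  set d := w.length - p.length with hd
  have hsuf : p <:+ w := by
    have h1 : p.reverse <:+ w.reverse := List.reverse_suffix.mpr hp
    rwa [hw, hpal] at h1
  obtain ⟨a, ha⟩ := id hp
  have hda : a.length = d := by
    have := congrArg List.length ha
    simp at this; omega
  have h1 : p = w.drop d := by
    have := List.suffix_iff_eq_drop.mp hsuf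
    simpa [hd] using this
  have h2 : w.drop d = p.drop d ++ a := by
    rw [← ha, List.drop_append_of_le_length (by omega)]
  have h3 : p = p.drop d ++ a := h1.trans h2
  have hq : (p.drop d) <+: p := ⟨a, h3.symm⟩
  have hqlen : (p.drop d).length = p.length - d := List.length_drop
  have htake : p.take (p.length - d) = p.drop d := by
    have h4 : (p.drop d ++ a).take (p.length - d) = p.drop d :=
      List.take_left' (by simp [List.length_drop])
    rw [← h3] at h4
    exact h4
  have hqpal : (p.drop d).reverse = p.drop d := by
    rw [List.reverse_drop, hpal, htake]
  exact ⟨hq.trans hp, hqpal, by omega⟩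

lemma properEPP_iff {m : ℕ} {x : List α} (hx : x.length = m) (hm : 1 ≤ m) :
    (∃ p : List α, p ≠ [] ∧ Even p.length ∧ p.length < 2 * m ∧
      p <+: x ++ x.reverse ∧ p.reverse = p) ↔ HasEvenPalPrefix x := by
  have hwlen : (x ++ x.reverse).length = 2 * m := by simp [hx]; omega
  have hwpal : (x ++ x.reverse).reverse = x ++ x.reverse := by
    rw [List.reverse_append, List.reverse_reverse]
  constructor
  · rintro ⟨p, hne, hev, hlt, hp, hpal⟩
    have main : ∀ j : ℕ, ∀ p : List α, p.length ≤ j → p ≠ [] → Even p.length →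
        p.length < 2 * m → p <+: x ++ x.reverse → p.reverse = p → HasEvenPalPrefix x := by
      intro j
      induction j with
      | zero =>
        intro p h0 hne _ _ _ _
        have : 0 < p.length := List.length_pos_iff.mpr hne
        omega
      | succ j ih =>
        intro p hle hne hev hlt hp hpal
        by_cases hsmall : p.length ≤ m
        · exact ⟨p, hne, hev, prefix_of_prefix_append hp (by omega), hpal⟩
        · obtain ⟨hq, hqpal, hqlen⟩ := pal_descent hwpal hp hpal (by omega) (by omega)
          have hpos : 0 < p.length := List.length_pos_iff.mpr hne
          refine ih _ (by omega) ?_ ?_ (by omega) hq hqpal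
          · rw [← List.length_pos_iff]; omega
          · rw [Nat.even_iff] at hev ⊢; omega
    exact main p.length p le_rfl hne hev hlt hp hpal
  · rintro ⟨p, hne, hev, hp, hpal⟩
    have hple : p.length ≤ m := hx ▸ hp.length_le
    exact ⟨p, hne, hev, by omega, hp.trans (List.prefix_append _ _), hpal⟩

end AuxUV
namespace AuxUV
variable {α : Type*}

lemma mid_facts {m : ℕ} {x y : List α} {c : α} (hx : x.length = m) :
    (x ++ c :: y).take m = x ∧ (x ++ c :: y).drop m = c :: y ∧
      (x ++ c :: y).drop (m + 1) = y := by
  refine ⟨List.take_left' hx, List.drop_left' hx, ?_⟩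
  have h1 : (x ++ [c]).length = m + 1 := by simp [hx]
  have : ((x ++ [c]) ++ y).drop (m + 1) = y := List.drop_left' h1
  rwa [← List.append_cons] at this

/-- C1: odd length middle-deletion preserves borderedness. -/
lemma bordered_odd_iff {m : ℕ} {x y : List α} {c : α} (hx : x.length = m)
    (hy : y.length = m) (hm : 1 ≤ m) :
    IsBordered (x ++ c :: y) ↔ IsBordered (x ++ y) := by
  have hw : (x ++ c :: y).length = 2 * m + 1 := by simp [hx, hy]; omega
  have hw' : (x ++ y).length = 2 * m := by simp [hx, hy]; omega
  constructor
  · intro h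
    obtain ⟨u, hne, hsm, hp, hs⟩ := exists_small_border h
    rw [hw] at hsm
    have hul : u.length ≤ m := by omega
    have hpx : u <+: x := prefix_of_prefix_append hp (by omega)
    have hsy : u <:+ y := by
      rw [List.append_cons] at hs
      exact suffix_of_suffix_append hs (by omega)
    refine isBordered_iff_small.mpr ⟨u, hne, ?_, hpx.trans (List.prefix_append x y),
      hsy.trans (List.suffix_append x y)⟩
    omega
  · intro h
    obtain ⟨u, hne, hsm, hp, hs⟩ := exists_small_border h
    rw [hw'] at hsm
    have hpx : u <+: x := prefix_of_prefix_append hp (by omega)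
    have hsy : u <:+ y := suffix_of_suffix_append hs (by omega)
    refine isBordered_iff_small.mpr ⟨u, hne, ?_, hpx.trans (List.prefix_append x _), ?_⟩
    · omega
    · rw [List.append_cons]
      exact hsy.trans (List.suffix_append _ y)

/-- C2: even-length middle-deletion. -/
lemma bordered_even_iff {m : ℕ} {x y : List α} {c : α} (hx : x.length = m)
    (hy : y.length + 1 = m) (hm : 1 ≤ m) :
    IsBordered (x ++ c :: y) ↔ IsBordered (x ++ y) ∨ x = c :: y := by
  have hw : (x ++ c :: y).length = 2 * m := by simp [hx]; omega
  have hw' : (x ++ y).length = 2 * m - 1 := by simp [hx]; omega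
  constructor
  · intro h
    obtain ⟨u, hne, hsm, hp, hs⟩ := exists_small_border h
    rw [hw] at hsm
    have hupos : 0 < u.length := List.length_pos_iff.mpr hne
    by_cases hcase : u.length ≤ m - 1
    · left
      have hpx : u <+: x := prefix_of_prefix_append hp (by omega)
      have hsy : u <:+ y := by
        rw [List.append_cons] at hs
        exact suffix_of_suffix_append hs (by omega)
      refine isBordered_iff_small.mpr ⟨u, hne, by omega,
        hpx.trans (List.prefix_append x y), hsy.trans (List.suffix_append x y)⟩
    · right
      have hum : u.length = m := by omega
      have hux : u = x := by
        have h1 := List.prefix_iff_eq_take.mp hp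
        rw [hum, (mid_facts hx).1] at h1
        exact h1
      have h2 := List.suffix_iff_eq_drop.mp hs
      rw [hum, hw] at h2
      have h3 : 2 * m - m = m := by omega
      rw [h3, (mid_facts hx).2.1] at h2
      rw [← hux, ← h2]
  · intro h
    rcases h with h | h
    · obtain ⟨u, hne, hsm, hp, hs⟩ := exists_small_border h
      rw [hw'] at hsm
      have hupos : 0 < u.length := List.length_pos_iff.mpr hne
      have hpx : u <+: x := prefix_of_prefix_append hp (by omega)
      have hsy : u <:+ y := suffix_of_suffix_append hs (by omega)
      refine isBordered_iff_small.mpr ⟨u, hne, by omega,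
        hpx.trans (List.prefix_append x _), ?_⟩
      rw [List.append_cons]
      exact hsy.trans (List.suffix_append _ y)
    · refine ⟨x, ?_, by omega, List.prefix_append x _, ?_⟩
      · rw [← List.length_pos_iff]; omega
      · conv_lhs => rw [h]
        exact List.suffix_append x (c :: y)

/-- C3: square lemma. -/
lemma bordered_square_iff {m : ℕ} {t : List α} (ht : t.length = m) (hm : 1 ≤ m) :
    IsBordered (t ++ t.tail) ↔ IsBordered t := by
  have htl : t.tail.length = m - 1 := by simp [ht]
  have hw : (t ++ t.tail).length = 2 * m - 1 := by simp [ht]; omega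
  constructor
  · intro h
    obtain ⟨u, hne, hsm, hp, hs⟩ := exists_small_border h
    rw [hw] at hsm
    have hupos : 0 < u.length := List.length_pos_iff.mpr hne
    have hpx : u <+: t := prefix_of_prefix_append hp (by omega)
    have hsy : u <:+ t.tail := suffix_of_suffix_append hs (by omega)
    exact ⟨u, hne, by omega, hpx, hsy.trans (List.tail_suffix t)⟩
  · intro h
    obtain ⟨u, hne, hsm, hp, hs⟩ := exists_small_border h
    rw [ht] at hsm
    have hupos : 0 < u.length := List.length_pos_iff.mpr hne
    have hst : u <:+ t.tail := suffix_of_suffix_le hs (List.tail_suffix t) (by omega)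
    exact ⟨u, hne, by omega, hp.trans (List.prefix_append t _),
      hst.trans (List.suffix_append t t.tail)⟩

/-- C4: odd-length extension preserves EPP. -/
lemma epp_odd_iff {w' : List α} {c : α} (hev : Even w'.length) :
    HasEvenPalPrefix (w' ++ [c]) ↔ HasEvenPalPrefix w' := by
  constructor
  · rintro ⟨p, hne, hpe, hp, hpal⟩
    have h1 : p.length ≤ w'.length + 1 := by
      have := hp.length_le; simpa using this
    have h2 : p.length ≤ w'.length := by
      rw [Nat.even_iff] at hpe hev; omega
    exact ⟨p, hne, hpe, prefix_of_prefix_append hp h2, hpal⟩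
  · rintro ⟨p, hne, hpe, hp, hpal⟩
    exact ⟨p, hne, hpe, hp.trans (List.prefix_append _ _), hpal⟩

/-- C5: even-length extension. -/
lemma epp_even_iff {m : ℕ} {w' : List α} {c : α} (hw' : w'.length = 2 * m - 1) (hm : 1 ≤ m) :
    HasEvenPalPrefix (w' ++ [c]) ↔
      HasEvenPalPrefix w' ∨ (w' ++ [c]).reverse = w' ++ [c] := by
  have hw : (w' ++ [c]).length = 2 * m := by simp [hw']; omega
  constructor
  · rintro ⟨p, hne, hpe, hp, hpal⟩
    have h1 : p.length ≤ 2 * m := by rw [← hw]; exact hp.length_le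
    by_cases h2 : p.length = 2 * m
    · right
      have : p = w' ++ [c] := hp.eq_of_length (by omega)
      rw [← this, hpal]
    · left
      have h3 : p.length ≤ w'.length := by omega
      exact ⟨p, hne, hpe, prefix_of_prefix_append hp h3, hpal⟩
  · rintro (⟨p, hne, hpe, hp, hpal⟩ | h)
    · exact ⟨p, hne, hpe, hp.trans (List.prefix_append _ _), hpal⟩
    · refine ⟨w' ++ [c], ?_, by rw [hw]; exact ⟨m, by omega⟩, List.prefix_refl _, h⟩
      rw [← List.length_pos_iff]; omega

end AuxUV
namespace AuxUV

def Ub (k n : ℕ) : Set (List (Fin k)) := {w | w.length = n ∧ ¬ IsBordered w}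
def Vp (k n : ℕ) : Set (List (Fin k)) := {w | w.length = n ∧ ¬ HasEvenPalPrefix w}
def Pl (k m : ℕ) : Set (List (Fin k)) :=
  {w | w.length = 2 * m ∧ w.reverse = w ∧
    ¬ ∃ p : List (Fin k), p ≠ [] ∧ Even p.length ∧ p.length < 2 * m ∧ p <+: w ∧ p.reverse = p}

lemma fin_Ub (k n : ℕ) : (Ub k n).Finite :=
  (List.finite_length_eq (Fin k) n).subset (fun _ hw => hw.1)

lemma fin_Vp (k n : ℕ) : (Vp k n).Finite :=
  (List.finite_length_eq (Fin k) n).subset (fun _ hw => hw.1)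

lemma fin_Pl (k m : ℕ) : (Pl k m).Finite :=
  (List.finite_length_eq (Fin k) (2 * m)).subset (fun _ hw => hw.1)

lemma ncard_prod_univ {k : ℕ} (s : Set (List (Fin k))) :
    (s ×ˢ (Set.univ : Set (Fin k))).ncard = s.ncard * k := by
  rw [← Nat.card_coe_set_eq, ← Nat.card_coe_set_eq,
    Nat.card_congr (Equiv.Set.prod s _), Nat.card_prod]
  congr 1
  rw [Nat.card_congr (Equiv.Set.univ (Fin k)), Nat.card_eq_fintype_card, Fintype.card_fin]

lemma cardU_odd {k m : ℕ} (hm : 1 ≤ m) :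
    (Ub k (2 * m + 1)).ncard = (Ub k (2 * m)).ncard * k := by
  have key : (fun p : List (Fin k) × Fin k => p.1.take m ++ p.2 :: p.1.drop m) ''
      (Ub k (2 * m) ×ˢ Set.univ) = Ub k (2 * m + 1) := by
    ext w
    constructor
    · rintro ⟨⟨w', c⟩, ⟨⟨hlen, hub⟩, -⟩, rfl⟩
      have hlen' : w'.length = 2 * m := hlen
      have hub' : ¬ IsBordered w' := hub
      have hx : (w'.take m).length = m := by rw [List.length_take]; omega
      have hy : (w'.drop m).length = m := by rw [List.length_drop]; omega
      refine ⟨by simp only [List.length_append, List.length_cons, hx, hy]; omega, ?_⟩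
      show ¬ IsBordered (w'.take m ++ c :: w'.drop m)
      rw [bordered_odd_iff hx hy hm, List.take_append_drop]
      exact hub'
    · rintro ⟨hlen, hub⟩
      have hmlt : m < w.length := by omega
      have hx : (w.take m).length = m := by rw [List.length_take]; omega
      have hy : (w.drop (m + 1)).length = m := by rw [List.length_drop]; omega
      have hw : w.take m ++ w[m] :: w.drop (m + 1) = w := by
        rw [← List.drop_eq_getElem_cons hmlt, List.take_append_drop]
      refine ⟨(w.take m ++ w.drop (m + 1), w[m]),
        ⟨⟨by simp only [List.length_append, hx, hy]; omega, ?_⟩, trivial⟩, ?_⟩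
      · show ¬ IsBordered (w.take m ++ w.drop (m + 1))
        rw [← bordered_odd_iff hx hy hm, hw]
        exact hub
      · simp only
        rw [List.take_left' hx, List.drop_left' hx, hw]
  have hinj : Set.InjOn (fun p : List (Fin k) × Fin k => p.1.take m ++ p.2 :: p.1.drop m)
      (Ub k (2 * m) ×ˢ Set.univ) := by
    rintro ⟨w1, c1⟩ ⟨⟨hl1, -⟩, -⟩ ⟨w2, c2⟩ ⟨⟨hl2, -⟩, -⟩ heq
    have hl1' : w1.length = 2 * m := hl1
    have hl2' : w2.length = 2 * m := hl2
    simp only at heq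
    have hx1 : (w1.take m).length = m := by rw [List.length_take]; omega
    have hx2 : (w2.take m).length = m := by rw [List.length_take]; omega
    obtain ⟨h1, h2⟩ := List.append_inj heq (by omega)
    obtain ⟨h3, h4⟩ := List.cons.injEq _ _ _ _ ▸ h2
    have : w1 = w2 := by
      rw [← List.take_append_drop m w1, ← List.take_append_drop m w2, h1, h4]
    simp [this, h3]
  rw [← key, Set.ncard_image_of_injOn hinj, ncard_prod_univ]

lemma cardU_even {k m : ℕ} (hm : 1 ≤ m) :
    (Ub k (2 * m)).ncard + (Ub k m).ncard = (Ub k (2 * m - 1)).ncard * k := by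
  set Sq : Set (List (Fin k)) := (fun t => t ++ t) '' Ub k m with hSq
  have key : (fun p : List (Fin k) × Fin k => p.1.take m ++ p.2 :: p.1.drop m) ''
      (Ub k (2 * m - 1) ×ˢ Set.univ) = Ub k (2 * m) ∪ Sq := by
    ext w
    constructor
    · rintro ⟨⟨w', c⟩, ⟨⟨hlen, hub⟩, -⟩, rfl⟩
      have hlen' : w'.length = 2 * m - 1 := hlen
      have hub' : ¬ IsBordered w' := hub
      have hx : (w'.take m).length = m := by rw [List.length_take]; omega
      have hy : (w'.drop m).length + 1 = m := by rw [List.length_drop]; omega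
      by_cases hXY : w'.take m = c :: w'.drop m
      · right
        refine ⟨w'.take m, ⟨hx, ?_⟩, ?_⟩
        · rw [← bordered_square_iff hx hm]
          have heq : w'.take m ++ (w'.take m).tail = w' := by
            rw [hXY, List.tail_cons, ← hXY, List.take_append_drop]
          rw [heq]
          exact hub'
        · show w'.take m ++ w'.take m = w'.take m ++ c :: w'.drop m
          conv_lhs => rw [hXY]
          rw [hXY]
      · left
        refine ⟨by simp only [List.length_append, List.length_cons, hx]; omega, ?_⟩
        show ¬ IsBordered (w'.take m ++ c :: w'.drop m)
        rw [bordered_even_iff hx hy hm]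
        rintro (h | h)
        · rw [List.take_append_drop] at h; exact hub' h
        · exact hXY h
    · rintro (⟨hlen, hub⟩ | ⟨t, ⟨htl, htub⟩, rfl⟩)
      · have hmlt : m < w.length := by omega
        have hx : (w.take m).length = m := by rw [List.length_take]; omega
        have hy : (w.drop (m + 1)).length + 1 = m := by rw [List.length_drop]; omega
        have hw : w.take m ++ w[m] :: w.drop (m + 1) = w := by
          rw [← List.drop_eq_getElem_cons hmlt, List.take_append_drop]
        refine ⟨(w.take m ++ w.drop (m + 1), w[m]),
          ⟨⟨by simp only [List.length_append, hx, List.length_drop]; omega, ?_⟩, trivial⟩, ?_⟩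
        · show ¬ IsBordered (w.take m ++ w.drop (m + 1))
          intro hb
          apply hub
          rw [← hw, bordered_even_iff hx hy hm]
          exact Or.inl hb
        · simp only
          rw [List.take_left' hx, List.drop_left' hx, hw]
      · have htl' : t.length = m := htl
        have htne : t ≠ [] := by rw [← List.length_pos_iff]; omega
        have htt : t.head htne :: t.tail = t := List.cons_head_tail htne
        refine ⟨(t ++ t.tail, t.head htne),
          ⟨⟨by simp only [List.length_append, List.length_tail, htl']; omega, ?_⟩, trivial⟩, ?_⟩
        · show ¬ IsBordered (t ++ t.tail)
          rw [bordered_square_iff htl' hm]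
          exact htub
        · simp only
          rw [List.take_left' htl', List.drop_left' htl', htt]
  have hdisj : Disjoint (Ub k (2 * m)) Sq := by
    rw [Set.disjoint_left]
    rintro w ⟨hlen, hub⟩ ⟨t, ⟨htl, -⟩, rfl⟩
    have htl' : t.length = m := htl
    apply hub
    refine ⟨t, by rw [← List.length_pos_iff]; omega,
      by simp only [List.length_append]; omega,
      List.prefix_append t t, List.suffix_append t t⟩
  have hinj : Set.InjOn (fun p : List (Fin k) × Fin k => p.1.take m ++ p.2 :: p.1.drop m)
      (Ub k (2 * m - 1) ×ˢ Set.univ) := by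
    rintro ⟨w1, c1⟩ ⟨⟨hl1, -⟩, -⟩ ⟨w2, c2⟩ ⟨⟨hl2, -⟩, -⟩ heq
    have hl1' : w1.length = 2 * m - 1 := hl1
    have hl2' : w2.length = 2 * m - 1 := hl2
    simp only at heq
    have hx1 : (w1.take m).length = m := by rw [List.length_take]; omega
    have hx2 : (w2.take m).length = m := by rw [List.length_take]; omega
    obtain ⟨h1, h2⟩ := List.append_inj heq (by omega)
    obtain ⟨h3, h4⟩ := List.cons.injEq _ _ _ _ ▸ h2
    have : w1 = w2 := by
      rw [← List.take_append_drop m w1, ← List.take_append_drop m w2, h1, h4]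
    simp [this, h3]
  have hsq : Sq.ncard = (Ub k m).ncard := by
    rw [hSq]
    apply Set.ncard_image_of_injOn
    rintro t1 ⟨hl1, -⟩ t2 ⟨hl2, -⟩ heq
    have hl1' : t1.length = m := hl1
    have hl2' : t2.length = m := hl2
    exact (List.append_inj heq (by omega)).1
  calc (Ub k (2 * m)).ncard + (Ub k m).ncard
      = (Ub k (2 * m)).ncard + Sq.ncard := by rw [hsq]
    _ = (Ub k (2 * m) ∪ Sq).ncard := (Set.ncard_union_eq hdisj (fin_Ub k _)
        ((fin_Ub k m).image _)).symm
    _ = (Ub k (2 * m - 1) ×ˢ Set.univ).ncard := by rw [← key, Set.ncard_image_of_injOn hinj]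
    _ = (Ub k (2 * m - 1)).ncard * k := ncard_prod_univ _

end AuxUV
namespace AuxUV

lemma cardV_odd {k m : ℕ} :
    (Vp k (2 * m + 1)).ncard = (Vp k (2 * m)).ncard * k := by
  have key : (fun p : List (Fin k) × Fin k => p.1 ++ [p.2]) ''
      (Vp k (2 * m) ×ˢ Set.univ) = Vp k (2 * m + 1) := by
    ext w
    constructor
    · rintro ⟨⟨w', c⟩, ⟨⟨hlen, hv⟩, -⟩, rfl⟩
      have hlen' : w'.length = 2 * m := hlen
      have hv' : ¬ HasEvenPalPrefix w' := hv
      refine ⟨by simp only [List.length_append, List.length_cons, List.length_nil, hlen'], ?_⟩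
      show ¬ HasEvenPalPrefix (w' ++ [c])
      rw [epp_odd_iff (by rw [hlen']; exact ⟨m, by omega⟩)]
      exact hv'
    · rintro ⟨hlen, hv⟩
      have hmlt : 2 * m < w.length := by omega
      have hw : w.take (2 * m) ++ [w[2 * m]] = w := by
        have h1 : w.drop (2 * m) = [w[2 * m]] := by
          rw [List.drop_eq_getElem_cons hmlt, List.drop_eq_nil_of_le (by omega)]
        rw [← h1, List.take_append_drop]
      have hx : (w.take (2 * m)).length = 2 * m := by rw [List.length_take]; omega
      refine ⟨(w.take (2 * m), w[2 * m]), ⟨⟨hx, ?_⟩, trivial⟩, hw⟩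
      show ¬ HasEvenPalPrefix (w.take (2 * m))
      rintro ⟨p, hne, hev, hp, hpal⟩
      exact hv ⟨p, hne, hev, hp.trans (List.take_prefix _ _), hpal⟩
  have hinj : Set.InjOn (fun p : List (Fin k) × Fin k => p.1 ++ [p.2])
      (Vp k (2 * m) ×ˢ Set.univ) := by
    rintro ⟨w1, c1⟩ ⟨⟨hl1, -⟩, -⟩ ⟨w2, c2⟩ ⟨⟨hl2, -⟩, -⟩ heq
    have hl1' : w1.length = 2 * m := hl1
    have hl2' : w2.length = 2 * m := hl2
    simp only at heq
    obtain ⟨h1, h2⟩ := List.append_inj heq (by omega)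
    simp [h1, List.cons.injEq _ _ _ _ ▸ h2]
  rw [← key, Set.ncard_image_of_injOn hinj, ncard_prod_univ]

lemma cardV_even {k m : ℕ} (hm : 1 ≤ m) :
    (Vp k (2 * m)).ncard + (Pl k m).ncard = (Vp k (2 * m - 1)).ncard * k := by
  have key : (fun p : List (Fin k) × Fin k => p.1 ++ [p.2]) ''
      (Vp k (2 * m - 1) ×ˢ Set.univ) = Vp k (2 * m) ∪ Pl k m := by
    ext w
    constructor
    · rintro ⟨⟨w', c⟩, ⟨⟨hlen, hv⟩, -⟩, rfl⟩
      have hlen' : w'.length = 2 * m - 1 := hlen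
      have hv' : ¬ HasEvenPalPrefix w' := hv
      have hwl : (w' ++ [c]).length = 2 * m := by
        simp only [List.length_append, List.length_cons, List.length_nil]; omega
      by_cases hpal : (w' ++ [c]).reverse = w' ++ [c]
      · right
        refine ⟨hwl, hpal, ?_⟩
        rintro ⟨p, hne, hev, hlt, hp, hpalp⟩
        exact hv' ⟨p, hne, hev, prefix_of_prefix_append hp (by omega), hpalp⟩
      · left
        refine ⟨hwl, ?_⟩
        rw [epp_even_iff hlen' hm]
        rintro (h | h)
        · exact hv' h
        · exact hpal h
    · have recon : ∀ w : List (Fin k), w.length = 2 * m →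
          ∃ h : 2 * m - 1 < w.length, w.take (2 * m - 1) ++ [w[2 * m - 1]] = w := by
        intro w hlen
        have hmlt : 2 * m - 1 < w.length := by omega
        refine ⟨hmlt, ?_⟩
        have h1 : w.drop (2 * m - 1) = [w[2 * m - 1]] := by
          rw [List.drop_eq_getElem_cons hmlt, List.drop_eq_nil_of_le (by omega)]
        rw [← h1, List.take_append_drop]
      rintro (⟨hlen, hv⟩ | ⟨hlen, hpal, hnp⟩)
      · obtain ⟨hmlt, hw⟩ := recon w hlen
        have hx : (w.take (2 * m - 1)).length = 2 * m - 1 := by rw [List.length_take]; omega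
        refine ⟨(w.take (2 * m - 1), w[2 * m - 1]), ⟨⟨hx, ?_⟩, trivial⟩, hw⟩
        show ¬ HasEvenPalPrefix (w.take (2 * m - 1))
        rintro ⟨p, hne, hev, hp, hpalp⟩
        exact hv ⟨p, hne, hev, hp.trans (List.take_prefix _ _), hpalp⟩
      · obtain ⟨hmlt, hw⟩ := recon w hlen
        have hx : (w.take (2 * m - 1)).length = 2 * m - 1 := by rw [List.length_take]; omega
        refine ⟨(w.take (2 * m - 1), w[2 * m - 1]), ⟨⟨hx, ?_⟩, trivial⟩, hw⟩
        show ¬ HasEvenPalPrefix (w.take (2 * m - 1))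
        rintro ⟨p, hne, hev, hp, hpalp⟩
        have hple : p.length ≤ 2 * m - 1 := by rw [← hx]; exact hp.length_le
        exact hnp ⟨p, hne, hev, by omega, hp.trans (List.take_prefix _ _), hpalp⟩
  have hdisj : Disjoint (Vp k (2 * m)) (Pl k m) := by
    rw [Set.disjoint_left]
    rintro w ⟨hlen, hv⟩ ⟨hlen2, hpal, -⟩
    exact hv ⟨w, by rw [← List.length_pos_iff]; omega, by rw [hlen]; exact ⟨m, by omega⟩,
      List.prefix_refl w, hpal⟩
  have hinj : Set.InjOn (fun p : List (Fin k) × Fin k => p.1 ++ [p.2])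
      (Vp k (2 * m - 1) ×ˢ Set.univ) := by
    rintro ⟨w1, c1⟩ ⟨⟨hl1, -⟩, -⟩ ⟨w2, c2⟩ ⟨⟨hl2, -⟩, -⟩ heq
    have hl1' : w1.length = 2 * m - 1 := hl1
    have hl2' : w2.length = 2 * m - 1 := hl2
    simp only at heq
    obtain ⟨h1, h2⟩ := List.append_inj heq (by omega)
    simp [h1, List.cons.injEq _ _ _ _ ▸ h2]
  calc (Vp k (2 * m)).ncard + (Pl k m).ncard
      = (Vp k (2 * m) ∪ Pl k m).ncard := (Set.ncard_union_eq hdisj (fin_Vp k _)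
        (fin_Pl k m)).symm
    _ = (Vp k (2 * m - 1) ×ˢ Set.univ).ncard := by rw [← key, Set.ncard_image_of_injOn hinj]
    _ = (Vp k (2 * m - 1)).ncard * k := ncard_prod_univ _

lemma card_Pl {k m : ℕ} (hm : 1 ≤ m) : (Pl k m).ncard = (Vp k m).ncard := by
  have key : (fun x : List (Fin k) => x ++ x.reverse) '' Vp k m = Pl k m := by
    ext w
    constructor
    · rintro ⟨x, ⟨hlen, hv⟩, rfl⟩
      have hlen' : x.length = m := hlen
      refine ⟨by simp only [List.length_append, List.length_reverse, hlen']; omega,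
        by rw [List.reverse_append, List.reverse_reverse], ?_⟩
      rw [properEPP_iff hlen' hm]
      exact hv
    · rintro ⟨hlen, hpal, hnp⟩
      have hx : (w.take m).length = m := by rw [List.length_take]; omega
      have hw : w.take m ++ (w.take m).reverse = w := by
        have h1 : (w.take m).reverse = w.drop m := by
          rw [List.reverse_take, hpal, hlen]
          congr 1
          omega
        rw [h1, List.take_append_drop]
      refine ⟨w.take m, ⟨hx, ?_⟩, hw⟩
      rw [← properEPP_iff hx hm]
      rw [hw]
      exact hnp
  have hinj : Set.InjOn (fun x : List (Fin k) => x ++ x.reverse) (Vp k m) := by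
    rintro x1 ⟨hl1, -⟩ x2 ⟨hl2, -⟩ heq
    have hl1' : x1.length = m := hl1
    have hl2' : x2.length = m := hl2
    exact (List.append_inj heq (by omega)).1
  rw [← key, Set.ncard_image_of_injOn hinj]

lemma main_aux (k : ℕ) : ∀ n : ℕ, 1 ≤ n → (Ub k n).ncard = (Vp k n).ncard := by
  intro n
  induction n using Nat.strong_induction_on with
  | _ n ih =>
    intro hn
    rcases eq_or_lt_of_le hn with h1 | h2
    · -- n = 1
      subst h1
      have hU : Ub k 1 = {w : List (Fin k) | w.length = 1} := by
        ext w
        simp only [Ub, Set.mem_setOf_eq, and_iff_left_iff_imp]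
        intro hw
        rintro ⟨u, hne, hlt, -, -⟩
        have := List.length_pos_iff.mpr hne
        omega
      have hV : Vp k 1 = {w : List (Fin k) | w.length = 1} := by
        ext w
        simp only [Vp, Set.mem_setOf_eq, and_iff_left_iff_imp]
        intro hw
        rintro ⟨p, hne, hev, hp, -⟩
        have h1 := List.length_pos_iff.mpr hne
        have h2 : p.length ≤ 1 := by rw [← hw]; exact hp.length_le
        rw [Nat.even_iff] at hev
        omega
      rw [hU, hV]
    · rcases Nat.even_or_odd n with ⟨m, hme⟩ | ⟨m, hmo⟩
      · -- n = 2m, m ≥ 1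
        have hm : 1 ≤ m := by omega
        obtain rfl : n = 2 * m := by omega
        have e1 := cardU_even (k := k) hm
        have e2 := cardV_even (k := k) hm
        have e3 := card_Pl (k := k) hm
        have e4 : (Ub k (2 * m - 1)).ncard = (Vp k (2 * m - 1)).ncard :=
          ih (2 * m - 1) (by omega) (by omega)
        have e5 : (Ub k m).ncard = (Vp k m).ncard := ih m (by omega) hm
        have e4' : (Ub k (2 * m - 1)).ncard * k = (Vp k (2 * m - 1)).ncard * k := by rw [e4]
        omega
      · -- n = 2m+1, m ≥ 1
        have hm : 1 ≤ m := by omega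
        obtain rfl : n = 2 * m + 1 := by omega
        have e1 := cardU_odd (k := k) hm
        have e2 := cardV_odd (k := k) (m := m)
        have e3 : (Ub k (2 * m)).ncard = (Vp k (2 * m)).ncard :=
          ih (2 * m) (by omega) (by omega)
        have e3' : (Ub k (2 * m)).ncard * k = (Vp k (2 * m)).ncard * k := by rw [e3]
        omega

end AuxUV


/-- for all `k ≥ 1` and `n ≥ 1`, the number of unbordered length-`n` words
over a `k`-letter alphabet equals the number of length-`n` words with no even palindromic
prefix: `u_k(n) = v_k(n)`. -/
theorem card_unbordered_eq_card_noEvenPalPrefix (k n : ℕ) (hk : 1 ≤ k) (hn : 1 ≤ n) :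
    {w : List (Fin k) | w.length = n ∧ ¬ IsBordered w}.ncard =
      {w : List (Fin k) | w.length = n ∧ ¬ HasEvenPalPrefix w}.ncard :=
  AuxUV.main_aux k n hn
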